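/- For every dimension d ≥ 1 and every nonempty finite set P of d-dimensional bricks, the set M(P) of ⪯-minimal bricks among the bricks tilable by P is finite. -/
import Mathlib


open scoped Classical

noncomputable section

/-- The (integer-valued) indicator function of the half-open box
`∏ i, [w i, w i + b i)` in `ℝ^d`, i.e. of the translate by `w` of the brick `b`. -/
def brickInd {d : ℕ} (b : Fin d → ℕ) (w : Fin d → ℝ) (y : Fin d → ℝ) : ℤ :=
  if ∀ i, w i ≤ y i ∧ y i < w i + (b i : ℝ) then 1 else 0

/-- `t` is tilable by the protoset `P`: the indicator function of `t` is an
integer-linear combination of indicator functions of translates of members of `P`. -/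
def Tilable {d : ℕ} (P : Set (Fin d → ℕ)) (t : Fin d → ℕ) : Prop :=
  ∃ (m : ℕ) (p : Fin m → (Fin d → ℕ)) (w : Fin m → (Fin d → ℝ)) (γ : Fin m → ℤ),
    (∀ j, p j ∈ P) ∧
      ∀ y : Fin d → ℝ, brickInd t (fun _ => 0) y = ∑ j, γ j * brickInd (p j) (w j) y

/-- `t` is packable by the protoset `P`: as for tilability but with all coefficients 1. -/
def Packable {d : ℕ} (P : Set (Fin d → ℕ)) (t : Fin d → ℕ) : Prop :=
  ∃ (m : ℕ) (p : Fin m → (Fin d → ℕ)) (w : Fin m → (Fin d → ℝ)),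
    (∀ j, p j ∈ P) ∧
      ∀ y : Fin d → ℝ, brickInd t (fun _ => 0) y = ∑ j, brickInd (p j) (w j) y

/-- The divisibility partial order on bricks: `b ⪯ t` iff each sidelength of `b`
divides the corresponding sidelength of `t`. -/
def BrickLE {d : ℕ} (b t : Fin d → ℕ) : Prop := ∀ i, b i ∣ t i

/-- The set of `⪯`-minimal elements of a set of bricks. -/
def MinOf {d : ℕ} (S : Set (Fin d → ℕ)) : Set (Fin d → ℕ) :=
  {t ∈ S | ∀ s ∈ S, BrickLE s t → s = t}

/-- `M(P)`: the set of `⪯`-minimal bricks among the bricks tilable by `P`. -/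
def MSet {d : ℕ} (P : Set (Fin d → ℕ)) : Set (Fin d → ℕ) :=
  MinOf {t | (∀ i, 0 < t i) ∧ Tilable P t}

/-- `rank(P) = card M(P)`. -/
def brickRank {d : ℕ} (P : Set (Fin d → ℕ)) : ℕ := (MSet P).ncard

/-- `comb_δ(A)`: gcd of the `δ`-th sidelengths, lcm of the others. -/
def combN {d : ℕ} (δ : Fin d) (A : Finset (Fin d → ℕ)) : Fin d → ℕ :=
  fun j => if j = δ then A.gcd (fun b => b δ) else A.lcm (fun b => b j)

/-- `Ext_δ(Q) = { comb_δ(A) : A a nonempty (finite) subset of Q }`. -/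
def ExtN {d : ℕ} (δ : Fin d) (Q : Set (Fin d → ℕ)) : Set (Fin d → ℕ) :=
  {b | ∃ A : Finset (Fin d → ℕ), A.Nonempty ∧ ↑A ⊆ Q ∧ b = combN δ A}

/-- `Ext_{1..d}(Q) = Ext_d (Ext_{d-1} (⋯ (Ext_1 Q) ⋯))`. -/
def ExtAllN {d : ℕ} (Q : Set (Fin d → ℕ)) : Set (Fin d → ℕ) :=
  (List.finRange d).foldl (fun S δ => ExtN δ S) Q

section Aux
variable {d : ℕ}

lemma brickInd_shift (b : Fin d → ℕ) (w u y : Fin d → ℝ) :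
    brickInd b (w + u) y = brickInd b w (y - u) := by
  unfold brickInd
  refine if_congr (forall_congr' fun i => ?_) rfl rfl
  simp only [Pi.add_apply, Pi.sub_apply]
  constructor <;> rintro ⟨h1, h2⟩ <;> constructor <;> linarith

def TilFun (P : Set (Fin d → ℕ)) (f : (Fin d → ℝ) → ℤ) : Prop :=
  ∃ (m : ℕ) (p : Fin m → (Fin d → ℕ)) (w : Fin m → (Fin d → ℝ)) (γ : Fin m → ℤ),
    (∀ j, p j ∈ P) ∧ ∀ y, f y = ∑ j, γ j * brickInd (p j) (w j) y

lemma tilable_iff {P : Set (Fin d → ℕ)} {t : Fin d → ℕ} :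
    Tilable P t ↔ TilFun P (fun y => brickInd t (fun _ => 0) y) := Iff.rfl

lemma TilFun.congr {P : Set (Fin d → ℕ)} {f g : (Fin d → ℝ) → ℤ}
    (h : TilFun P f) (hfg : ∀ y, f y = g y) : TilFun P g := by
  obtain ⟨m, p, w, γ, hp, he⟩ := h
  exact ⟨m, p, w, γ, hp, fun y => (hfg y) ▸ he y⟩

lemma TilFun.add {P : Set (Fin d → ℕ)} {f g : (Fin d → ℝ) → ℤ}
    (hf : TilFun P f) (hg : TilFun P g) : TilFun P (fun y => f y + g y) := by
  obtain ⟨m1, p1, w1, γ1, hp1, he1⟩ := hf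
  obtain ⟨m2, p2, w2, γ2, hp2, he2⟩ := hg
  refine ⟨m1 + m2, Fin.append p1 p2, Fin.append w1 w2, Fin.append γ1 γ2, ?_, ?_⟩
  · intro j
    refine Fin.addCases (fun k => ?_) (fun k => ?_) j <;>
      simp [Fin.append_left, Fin.append_right, hp1, hp2]
  · intro y
    rw [Fin.sum_univ_add]
    simp only [Fin.append_left, Fin.append_right]
    rw [he1 y, he2 y]

lemma TilFun.neg {P : Set (Fin d → ℕ)} {f : (Fin d → ℝ) → ℤ}
    (hf : TilFun P f) : TilFun P (fun y => -f y) := by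
  obtain ⟨m, p, w, γ, hp, he⟩ := hf
  refine ⟨m, p, w, fun j => -γ j, hp, fun y => ?_⟩
  show -f y = _
  rw [he y, ← Finset.sum_neg_distrib]
  exact Finset.sum_congr rfl fun j _ => by ring

lemma TilFun.shift {P : Set (Fin d → ℕ)} {f : (Fin d → ℝ) → ℤ}
    (hf : TilFun P f) (u : Fin d → ℝ) : TilFun P (fun y => f (y - u)) := by
  obtain ⟨m, p, w, γ, hp, he⟩ := hf
  refine ⟨m, p, fun j => w j + u, γ, hp, fun y => ?_⟩
  show f (y - u) = _
  rw [he (y - u)]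
  exact Finset.sum_congr rfl fun j _ => by rw [brickInd_shift]

lemma brickInd_eq_prod (b : Fin d → ℕ) (w y : Fin d → ℝ) :
    brickInd b w y = ∏ i, if w i ≤ y i ∧ y i < w i + (b i : ℝ) then (1 : ℤ) else 0 := by
  unfold brickInd
  by_cases h : ∀ i, w i ≤ y i ∧ y i < w i + (b i : ℝ)
  · rw [if_pos h]
    rw [Finset.prod_congr rfl fun i _ => if_pos (h i)]
    simp
  · rw [if_neg h]
    push_neg at h
    obtain ⟨i, hi⟩ := h
    refine (Finset.prod_eq_zero (Finset.mem_univ i) ?_).symm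
    rw [if_neg]
    intro ⟨h1, h2⟩
    exact absurd h2 (not_lt.mpr (hi h1))

end Aux

section Aux2
variable {d : ℕ}

lemma ite_interval_split (x α β : ℝ) (hα : 0 ≤ α) (hβ : 0 ≤ β) :
    (if 0 ≤ x ∧ x < α + β then (1:ℤ) else 0)
      = (if 0 ≤ x ∧ x < α then (1:ℤ) else 0) + (if α ≤ x ∧ x < α + β then (1:ℤ) else 0) := by
  by_cases h0 : 0 ≤ x
  · by_cases h1 : x < α
    · rw [if_pos ⟨h0, by linarith⟩, if_pos ⟨h0, h1⟩,
        if_neg (fun h => absurd h.1 (not_le.mpr h1))]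
      norm_num
    · by_cases h2 : x < α + β
      · rw [if_pos ⟨h0, h2⟩, if_neg (fun h => h1 h.2), if_pos ⟨not_lt.mp h1, h2⟩]
        norm_num
      · rw [if_neg (fun h => h2 h.2), if_neg (fun h => h1 h.2), if_neg (fun h => h2 h.2)]
        norm_num
  · rw [if_neg (fun h => h0 h.1), if_neg (fun h => h0 h.1),
      if_neg (fun h => h0 (le_trans hα h.1))]
    norm_num

lemma ind_split (t : Fin d → ℕ) (δ : Fin d) (a b : ℕ) (y : Fin d → ℝ) :
    brickInd (Function.update t δ (a + b)) (fun _ => 0) y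
      = brickInd (Function.update t δ a) (fun _ => 0) y
        + brickInd (Function.update t δ b) (fun i => if i = δ then (a : ℝ) else 0) y := by
  rw [brickInd_eq_prod, brickInd_eq_prod, brickInd_eq_prod]
  rw [← Finset.mul_prod_erase Finset.univ _ (Finset.mem_univ δ),
      ← Finset.mul_prod_erase Finset.univ _ (Finset.mem_univ δ),
      ← Finset.mul_prod_erase Finset.univ _ (Finset.mem_univ δ)]
  have hrest : ∀ (c : ℕ) (w : Fin d → ℝ), (∀ i, i ≠ δ → w i = 0) →
      (∏ i ∈ Finset.univ.erase δ,
        if w i ≤ y i ∧ y i < w i + ((Function.update t δ c i : ℕ) : ℝ) then (1:ℤ) else 0)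
      = ∏ i ∈ Finset.univ.erase δ, if 0 ≤ y i ∧ y i < (t i : ℝ) then (1:ℤ) else 0 := by
    intro c w hw
    refine Finset.prod_congr rfl fun i hi => ?_
    have hne : i ≠ δ := Finset.ne_of_mem_erase hi
    rw [Function.update_of_ne hne, hw i hne]
    norm_num
  rw [hrest (a+b) _ (fun i h => rfl), hrest a _ (fun i h => rfl),
      hrest b _ (fun i h => if_neg h)]
  rw [← add_mul]
  congr 1
  simp only [Function.update_self, if_pos rfl]
  push_cast
  simp only [zero_add]
  exact ite_interval_split (y δ) a b (Nat.cast_nonneg a) (Nat.cast_nonneg b)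

lemma tilable_update_add {P : Set (Fin d → ℕ)} {t : Fin d → ℕ} {δ : Fin d} {a b : ℕ}
    (ha : Tilable P (Function.update t δ a)) (hb : Tilable P (Function.update t δ b)) :
    Tilable P (Function.update t δ (a + b)) := by
  rw [tilable_iff] at *
  set u : Fin d → ℝ := fun i => if i = δ then (a : ℝ) else 0 with hu
  have hb' : TilFun P (fun y => brickInd (Function.update t δ b) u y) := by
    refine (hb.shift u).congr fun y => ?_
    rw [← brickInd_shift]
    congr 1
    funext i
    simp
  exact (ha.add hb').congr fun y => (ind_split t δ a b y).symm

lemma tilable_update_sub {P : Set (Fin d → ℕ)} {t : Fin d → ℕ} {δ : Fin d} {a b : ℕ}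
    (hab : Tilable P (Function.update t δ (a + b))) (hb : Tilable P (Function.update t δ b)) :
    Tilable P (Function.update t δ a) := by
  rw [tilable_iff] at *
  set u : Fin d → ℝ := fun i => if i = δ then (a : ℝ) else 0 with hu
  have hb' : TilFun P (fun y => brickInd (Function.update t δ b) u y) := by
    refine (hb.shift u).congr fun y => ?_
    rw [← brickInd_shift]
    congr 1
    funext i
    simp
  exact (hab.add hb'.neg).congr fun y => by
    have h := ind_split t δ a b y
    rw [← hu] at h
    omega

lemma tilable_update_mul {P : Set (Fin d → ℕ)} {t : Fin d → ℕ} {δ : Fin d} {a : ℕ}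
    (ha : Tilable P (Function.update t δ a)) (k : ℕ) :
    Tilable P (Function.update t δ (k * a)) := by
  induction k with
  | zero =>
    refine ⟨0, Fin.elim0, Fin.elim0, Fin.elim0, fun j => j.elim0, fun y => ?_⟩
    rw [Fin.sum_univ_zero]
    unfold brickInd
    rw [if_neg]
    intro h
    have h2 := h δ
    rw [Function.update_self] at h2
    simp only [Nat.zero_mul, Nat.cast_zero, add_zero] at h2
    linarith [h2.1, h2.2]
  | succ k ih =>
    have : (k + 1) * a = k * a + a := by ring
    rw [this]
    exact tilable_update_add ih ha

lemma tilable_of_le {P : Set (Fin d → ℕ)} {b t : Fin d → ℕ}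
    (hb : Tilable P b) (hle : BrickLE b t) : Tilable P t := by
  have key : ∀ A : Finset (Fin d), Tilable P (fun i => if i ∈ A then t i else b i) := by
    intro A
    induction A using Finset.induction_on with
    | empty => simpa using hb
    | @insert δ A hδA ih =>
      have e1 : (fun i => if i ∈ insert δ A then t i else b i)
          = Function.update (fun i => if i ∈ A then t i else b i) δ ((t δ / b δ) * b δ) := by
        funext i
        by_cases h : i = δ
        · rw [h, if_pos (Finset.mem_insert_self δ A), Function.update_self]
          exact (Nat.div_mul_cancel (hle δ)).symm
        · simp [Function.update_of_ne h, Finset.mem_insert, h]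
      have e2 : (fun i => if i ∈ A then t i else b i)
          = Function.update (fun i => if i ∈ A then t i else b i) δ (b δ) := by
        funext i
        by_cases h : i = δ
        · rw [h, if_neg hδA, Function.update_self]
        · simp [Function.update_of_ne h]
      rw [e1]
      exact tilable_update_mul (e2 ▸ ih) (t δ / b δ)
  have := key Finset.univ
  simpa using this

end Aux2

section Aux3
variable {d : ℕ}

/-- In a nonempty set of positive naturals closed under positive differences,
the least element divides every element. -/
lemma sInf_dvd_of_sub_closed (W : Set ℕ) (hpos : ∀ a ∈ W, 0 < a)
    (hsub : ∀ a ∈ W, ∀ b ∈ W, b < a → a - b ∈ W) (hne : W.Nonempty) :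
    ∀ a ∈ W, sInf W ∣ a := by
  intro a
  induction a using Nat.strong_induction_on with
  | _ a ih =>
    intro ha
    have hle : sInf W ≤ a := Nat.sInf_le ha
    rcases eq_or_lt_of_le hle with h | h
    · exact h ▸ dvd_refl _
    · have hmem : a - sInf W ∈ W := hsub a ha _ (Nat.sInf_mem hne) h
      have hlt : a - sInf W < a := by
        have := hpos _ (Nat.sInf_mem hne)
        omega
      have := ih _ hlt hmem
      have : sInf W ∣ (a - sInf W) + sInf W := Dvd.dvd.add this (dvd_refl _)
      rwa [Nat.sub_add_cancel hle] at this

/-- Every element of a set of positive bricks lies above a minimal element. -/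
lemma exists_minOf_le (T : Set (Fin d → ℕ)) (hpos : ∀ s ∈ T, ∀ i, 0 < s i) :
    ∀ v ∈ T, ∃ τ ∈ MinOf T, BrickLE τ v := by
  have main : ∀ (n : ℕ) (v), v ∈ T → (∏ i, v i) ≤ n → ∃ τ ∈ MinOf T, BrickLE τ v := by
    intro n
    induction n with
    | zero =>
      intro v hv hle
      exfalso
      have : 0 < ∏ i, v i := Finset.prod_pos fun i _ => hpos v hv i
      omega
    | succ n ih =>
      intro v hv hle
      by_cases h : ∀ s ∈ T, BrickLE s v → s = v
      · exact ⟨v, ⟨hv, h⟩, fun i => dvd_refl _⟩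
      · push_neg at h
        obtain ⟨s, hs, hsv, hne⟩ := h
        have hlt : ∏ i, s i < ∏ i, v i := by
          refine Finset.prod_lt_prod (fun i _ => hpos s hs i)
            (fun i _ => Nat.le_of_dvd (hpos v hv i) (hsv i)) ?_
          have : ∃ i, s i ≠ v i := by
            by_contra hc
            push_neg at hc
            exact hne (funext hc)
          obtain ⟨i, hi⟩ := this
          exact ⟨i, Finset.mem_univ i, lt_of_le_of_ne
            (Nat.le_of_dvd (hpos v hv i) (hsv i)) hi⟩
        obtain ⟨τ, hτ, hτs⟩ := ih s hs (by omega)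
        exact ⟨τ, hτ, fun i => dvd_trans (hτs i) (hsv i)⟩
  intro v hv
  exact main (∏ i, v i) v hv le_rfl

end Aux3

section Aux4
variable {d : ℕ}

lemma abstract_finite (n : ℕ) : ∀ (K : Finset (Fin d)) (S : Set (Fin d → ℕ)),
    K.card ≤ n →
    (∀ s ∈ S, (∀ i, 0 < s i) ∧ ∀ j, j ∉ K → s j = 1) →
    (∀ s ∈ S, ∀ t, BrickLE s t → (∀ i, 0 < t i) → (∀ j, j ∉ K → t j = 1) → t ∈ S) →
    (∀ δ ∈ K, ∀ s t a, s ∈ S → t ∈ S → (∀ j, j ≠ δ → s j = t j) →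
        s δ = a + t δ → 0 < a → Function.update s δ a ∈ S) →
    (MinOf S).Finite := by
  induction n with
  | zero =>
    intro K S hcard hP _ _
    have hK : K = ∅ := Finset.card_eq_zero.mp (Nat.le_antisymm hcard (Nat.zero_le _))
    have hsub : MinOf S ⊆ {fun _ => 1} := by
      intro s hs
      have h1 := (hP s hs.1).2
      have : s = fun _ => 1 := funext fun i => h1 i (by simp [hK])
      simp [this]
    exact (Set.finite_singleton _).subset hsub
  | succ n ih =>
    intro K S hcard hP hA hB
    set T : Fin d → Set (Fin d → ℕ) := fun δ =>
      {v | (∀ i, 0 < v i) ∧ (∀ j, j ∉ K.erase δ → v j = 1) ∧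
        ∃ a, 0 < a ∧ Function.update v δ a ∈ S} with hT
    -- minimal sets of the projections are finite
    have hTfin : ∀ δ ∈ K, (MinOf (T δ)).Finite := by
      intro δ hδK
      refine ih (K.erase δ) (T δ) ?_ ?_ ?_ ?_
      · rw [Finset.card_erase_of_mem hδK]; omega
      · exact fun v hv => ⟨hv.1, hv.2.1⟩
      · -- up-closure of T δ
        rintro v ⟨hvpos, hvpin, a, ha0, haS⟩ v' hle hpos' hpin'
        refine ⟨hpos', hpin', a, ha0, ?_⟩
        refine hA _ haS _ ?_ ?_ ?_
        · intro i
          by_cases h : i = δ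
          · subst h; rw [Function.update_self, Function.update_self]
          · rw [Function.update_of_ne h, Function.update_of_ne h]; exact hle i
        · intro i
          by_cases h : i = δ
          · subst h; rw [Function.update_self]; exact ha0
          · rw [Function.update_of_ne h]; exact hpos' i
        · intro j hj
          have hjδ : j ≠ δ := fun h => hj (h ▸ hδK)
          rw [Function.update_of_ne hjδ]
          exact hpin' j (fun hm => hj (Finset.mem_of_mem_erase hm))
      · -- subtraction closure of T δ
        rintro δ' hδ' v v' a' ⟨hvpos, hvpin, a, ha0, haS⟩ ⟨hv'pos, hv'pin, b, hb0, hbS⟩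
          hagree hsum ha'0
        have hδ'δ : δ' ≠ δ := Finset.ne_of_mem_erase hδ'
        have hδ'K : δ' ∈ K := Finset.mem_of_mem_erase hδ'
        set l := Nat.lcm a b with hl
        have hl0 : 0 < l := Nat.lcm_pos ha0 hb0
        have hlift : ∀ (u : Fin d → ℕ) (c : ℕ), 0 < c → c ∣ l → (∀ i, 0 < u i) →
            (∀ j, j ∉ K.erase δ → u j = 1) → Function.update u δ c ∈ S →
            Function.update u δ l ∈ S := by
          intro u c hc0 hcl hupos hupin hcS
          refine hA _ hcS _ ?_ ?_ ?_
          · intro i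
            by_cases h : i = δ
            · subst h; rw [Function.update_self, Function.update_self]; exact hcl
            · rw [Function.update_of_ne h, Function.update_of_ne h]
          · intro i
            by_cases h : i = δ
            · subst h; rw [Function.update_self]; exact hl0
            · rw [Function.update_of_ne h]; exact hupos i
          · intro j hj
            have hjδ : j ≠ δ := fun h => hj (h ▸ hδK)
            rw [Function.update_of_ne hjδ]
            exact hupin j (fun hm => hj (Finset.mem_of_mem_erase hm))
        have hs1 : Function.update v δ l ∈ S :=
          hlift v a ha0 (Nat.dvd_lcm_left a b) hvpos hvpin haS
        have hs2 : Function.update v' δ l ∈ S :=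
          hlift v' b hb0 (Nat.dvd_lcm_right a b) hv'pos hv'pin hbS
        have happ : Function.update (Function.update v δ l) δ' a' ∈ S := by
          refine hB δ' hδ'K _ _ a' hs1 hs2 ?_ ?_ ha'0
          · intro j hj
            by_cases h : j = δ
            · subst h; rw [Function.update_self, Function.update_self]
            · rw [Function.update_of_ne h, Function.update_of_ne h]; exact hagree j hj
          · rw [Function.update_of_ne hδ'δ, Function.update_of_ne hδ'δ]; exact hsum
        refine ⟨?_, ?_, l, hl0, ?_⟩
        · intro i
          by_cases h : i = δ'
          · subst h; rw [Function.update_self]; exact ha'0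
          · rw [Function.update_of_ne h]; exact hvpos i
        · intro j hj
          have hjδ' : j ≠ δ' := fun h => hj (h ▸ hδ')
          rw [Function.update_of_ne hjδ']
          exact hvpin j hj
        · rw [Function.update_comm hδ'δ]
          exact happ
    -- the finite coordinate sets
    set g : Fin d → (Fin d → ℕ) → ℕ := fun δ τ =>
      sInf {a | 0 < a ∧ Function.update τ δ a ∈ S} with hg
    set C : Fin d → Set ℕ := fun δ =>
      if hδ : δ ∈ K then ⋃ τ ∈ MinOf (T δ), {a | a ∣ g δ τ ∧ 0 < a} else {1} with hC
    have hCfin : ∀ δ, (C δ).Finite := by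
      intro δ
      simp only [hC]
      by_cases hδ : δ ∈ K
      · rw [dif_pos hδ]
        refine Set.Finite.biUnion (hTfin δ hδ) ?_
        intro τ hτ
        have hne : {a | 0 < a ∧ Function.update τ δ a ∈ S}.Nonempty := by
          obtain ⟨a, ha0, haS⟩ := hτ.1.2.2
          exact ⟨a, ha0, haS⟩
        have hg0 : 0 < g δ τ := (Nat.sInf_mem hne).1
        refine (Set.finite_Iic (g δ τ)).subset ?_
        rintro a ⟨hdvd, ha0⟩
        exact Nat.le_of_dvd hg0 hdvd
      · rw [dif_neg hδ]
        exact Set.finite_singleton _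
    -- MinOf S is contained in the product of the C δ
    have hsubset : MinOf S ⊆ Set.univ.pi C := by
      rintro s ⟨hsS, hsmin⟩ δ _
      obtain ⟨hspos, hspin⟩ := hP s hsS
      simp only [hC]
      by_cases hδK : δ ∈ K
      · rw [dif_pos hδK]
        set v := Function.update s δ 1 with hv
        have hvpos : ∀ i, 0 < v i := by
          intro i
          by_cases h : i = δ
          · subst h; rw [hv, Function.update_self]; exact Nat.one_pos
          · rw [hv, Function.update_of_ne h]; exact hspos i
        have hvs : Function.update v δ (s δ) = s := by
          rw [hv, Function.update_idem, Function.update_eq_self]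
        have hvT : v ∈ T δ := by
          refine ⟨hvpos, ?_, s δ, hspos δ, by rw [hvs]; exact hsS⟩
          intro j hj
          by_cases h : j = δ
          · subst h; rw [hv, Function.update_self]
          · rw [hv, Function.update_of_ne h]
            exact hspin j (fun hm => hj (Finset.mem_erase_of_ne_of_mem h hm))
        obtain ⟨τ, hτmin, hτv⟩ := exists_minOf_le (T δ) (fun x hx => hx.1) v hvT
        set Wv := {a | 0 < a ∧ Function.update v δ a ∈ S} with hWv
        have hWvsub : ∀ a ∈ Wv, ∀ b ∈ Wv, b < a → a - b ∈ Wv := by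
          rintro a ⟨ha0, haS⟩ b ⟨hb0, hbS⟩ hba
          have := hB δ hδK (Function.update v δ a) (Function.update v δ b) (a - b)
            haS hbS (fun j hj => by rw [Function.update_of_ne hj, Function.update_of_ne hj])
            (by rw [Function.update_self, Function.update_self]; omega) (by omega)
          rw [Function.update_idem] at this
          exact ⟨by omega, this⟩
        have hsδWv : s δ ∈ Wv := ⟨hspos δ, by rw [hvs]; exact hsS⟩
        have hWvne : Wv.Nonempty := ⟨s δ, hsδWv⟩
        have hdvdall := sInf_dvd_of_sub_closed Wv (fun a ha => ha.1) hWvsub hWvne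
        have hg'mem : sInf Wv ∈ Wv := Nat.sInf_mem hWvne
        -- minimality of s forces s δ = sInf Wv
        have hupd : Function.update s δ (sInf Wv) ∈ S := by
          have : Function.update v δ (sInf Wv) = Function.update s δ (sInf Wv) := by
            rw [hv, Function.update_idem]
          rw [← this]
          exact hg'mem.2
        have hle : BrickLE (Function.update s δ (sInf Wv)) s := by
          intro i
          by_cases h : i = δ
          · subst h; rw [Function.update_self]; exact hdvdall _ hsδWv
          · rw [Function.update_of_ne h]
        have heq := hsmin _ hupd hle
        have hsδ : s δ = sInf Wv := by
          have := congrFun heq δ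
          rw [Function.update_self] at this
          exact this.symm
        -- the section at τ is contained in the section at v
        have hWsub : ∀ a, 0 < a → Function.update τ δ a ∈ S → a ∈ Wv := by
          intro a ha0 haS
          refine ⟨ha0, hA _ haS _ ?_ ?_ ?_⟩
          · intro i
            by_cases h : i = δ
            · subst h; rw [Function.update_self, Function.update_self]
            · rw [Function.update_of_ne h, Function.update_of_ne h]; exact hτv i
          · intro i
            by_cases h : i = δ
            · subst h; rw [Function.update_self]; exact ha0
            · rw [Function.update_of_ne h]; exact hvpos i
          · intro j hj
            have hjδ : j ≠ δ := fun h => hj (h ▸ hδK)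
            rw [Function.update_of_ne hjδ, hv, Function.update_of_ne hjδ]
            exact hspin j hj
        have hgτWv : g δ τ ∈ Wv := by
          have hne : {a | 0 < a ∧ Function.update τ δ a ∈ S}.Nonempty := by
            obtain ⟨a, ha0, haS⟩ := hτmin.1.2.2
            exact ⟨a, ha0, haS⟩
          have := Nat.sInf_mem hne
          exact hWsub _ this.1 this.2
        have : s δ ∣ g δ τ := hsδ ▸ hdvdall _ hgτWv
        exact Set.mem_biUnion hτmin ⟨this, hspos δ⟩
      · rw [dif_neg hδK]
        exact hspin δ hδK
    exact (Set.Finite.pi hCfin).subset hsubset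

end Aux4

/-- For every dimension `d ≥ 1` and every nonempty finite set `P` of
`d`-dimensional bricks, the set `M(P)` of `⪯`-minimal bricks among the bricks tilable
by `P` is finite. -/
theorem statement0 {d : ℕ} (hd : 1 ≤ d) (P : Finset (Fin d → ℕ))
    (hne : P.Nonempty) (hpos : ∀ b ∈ P, ∀ i, 0 < b i) :
    (MSet (↑P : Set (Fin d → ℕ))).Finite := by
  have h := abstract_finite (d := d) (Finset.univ : Finset (Fin d)).card Finset.univ
      {t | (∀ i, 0 < t i) ∧ Tilable (↑P : Set (Fin d → ℕ)) t} le_rfl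
      (fun s hs => ⟨hs.1, fun j hj => absurd (Finset.mem_univ j) hj⟩)
      (fun s hs t hle hpost _ => ⟨hpost, tilable_of_le hs.2 hle⟩)
      ?_
  · exact h
  · intro δ _ s t a hs ht hagree hsum ha0
    constructor
    · intro i
      by_cases h : i = δ
      · subst h; rw [Function.update_self]; exact ha0
      · rw [Function.update_of_ne h]; exact hs.1 i
    · have hts : t = Function.update s δ (t δ) := by
        funext j
        by_cases h : j = δ
        · subst h; rw [Function.update_self]
        · rw [Function.update_of_ne h]; exact (hagree j h).symm
      have hs' : Tilable (↑P : Set (Fin d → ℕ)) (Function.update s δ (a + t δ)) := by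
        have : s = Function.update s δ (a + t δ) := by
          funext j
          by_cases h : j = δ
          · subst h; rw [Function.update_self]; exact hsum
          · rw [Function.update_of_ne h]
        exact this ▸ hs.2
      exact tilable_update_sub hs' (hts ▸ ht.2)
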